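/- For any group G the following three statements are equivalent: (1) there exist a partition {A_1,…,A_p, B_1,…,B_q} of G and elements s_1,…,s_p, t_1,…,t_q ∈ G such that {s_iA_i}_{i=1}^p and {t_jB_j}_{j=1}^q each form a partition of G; (2) there exist pairwise disjoint subsets A_1,…,A_p, B_1,…,B_q of G and elements s_1,…,s_p, t_1,…,t_q ∈ G such that {s_iA_i}_{i=1}^p and {t_jB_j}_{j=1}^q each form a partition of G; (3) there exist pairwise disjoint subsets A_1,…,A_p, B_1,…,B_q of G and elements s_1,…,s_p, t_1,…,t_q ∈ G such that G = ⋃_{i=1}^p s_iA_i = ⋃_{j=1}^q t_jB_j (the unions not necessarily disjoint). -/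
import Mathlib

open Pointwise

private lemma partition_of_cover {G : Type*} [Group G] {p : ℕ} (s : Fin p → G)
    (A : Fin p → Set G) (hcov : (⋃ i, s i • A i) = Set.univ) :
    ∃ A' : Fin p → Set G, (∀ i, A' i ⊆ A i) ∧ (⋃ i, s i • A' i) = Set.univ ∧
      (∀ i i', i ≠ i' → Disjoint (s i • A' i) (s i' • A' i')) := by
  classical
  set X : Fin p → Set G := fun i => s i • A i \ ⋃ k, ⋃ (_ : k < i), s k • A k with hX
  have hsx : ∀ i, s i • (s i)⁻¹ • X i = X i := fun i => smul_inv_smul _ _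
  refine ⟨fun i => (s i)⁻¹ • X i, ?_, ?_, ?_⟩
  · intro i
    have h1 : X i ⊆ s i • A i := Set.diff_subset
    calc (s i)⁻¹ • X i ⊆ (s i)⁻¹ • (s i • A i) := Set.smul_set_mono h1
      _ = A i := inv_smul_smul _ _
  · simp only [hsx]
    ext x
    simp only [Set.mem_iUnion, Set.mem_univ, iff_true]
    have hx : x ∈ ⋃ i, s i • A i := hcov ▸ Set.mem_univ x
    rw [Set.mem_iUnion] at hx
    obtain ⟨i, hi, hmin⟩ := wellFounded_lt.has_min {i | x ∈ s i • A i} hx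
    refine ⟨i, hi, ?_⟩
    simp only [Set.mem_iUnion]
    rintro ⟨k, hk, hxk⟩
    exact hmin k hxk hk
  · intro i i' hne
    simp only [hsx]
    rw [Set.disjoint_left]
    intro x hxi hxi'
    rcases hne.lt_or_gt with h | h
    · exact hxi'.2 (Set.mem_iUnion.2 ⟨i, Set.mem_iUnion.2 ⟨h, hxi.1⟩⟩)
    · exact hxi.2 (Set.mem_iUnion.2 ⟨i', Set.mem_iUnion.2 ⟨h, hxi'.1⟩⟩)


private lemma two_to_one {G : Type*} [Group G] {p q : ℕ} {A : Fin p → Set G}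
    {B : Fin q → Set G} {s : Fin p → G} {t : Fin q → G}
    (hA : ∀ i i', i ≠ i' → Disjoint (A i) (A i'))
    (hB : ∀ j j', j ≠ j' → Disjoint (B j) (B j'))
    (hAB : ∀ i j, Disjoint (A i) (B j))
    (hsU : (⋃ i, s i • A i) = Set.univ)
    (hsD : ∀ i i', i ≠ i' → Disjoint (s i • A i) (s i' • A i'))
    (htU : (⋃ j, t j • B j) = Set.univ)
    (htD : ∀ j j', j ≠ j' → Disjoint (t j • B j) (t j' • B j')) :
    ∃ (p q : ℕ) (A : Fin p → Set G) (B : Fin q → Set G) (s : Fin p → G) (t : Fin q → G),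
        (∀ i i', i ≠ i' → Disjoint (A i) (A i')) ∧
        (∀ j j', j ≠ j' → Disjoint (B j) (B j')) ∧
        (∀ i j, Disjoint (A i) (B j)) ∧
        ((⋃ i, A i) ∪ (⋃ j, B j)) = Set.univ ∧
        (⋃ i, s i • A i) = Set.univ ∧
        (∀ i i', i ≠ i' → Disjoint (s i • A i) (s i' • A i')) ∧
        (⋃ j, t j • B j) = Set.univ ∧
        (∀ j j', j ≠ j' → Disjoint (t j • B j) (t j' • B j')) := by
  classical
  set U : Set G := ⋃ j, B j with hU
  set T : Set G → Set G := fun S => ⋃ i, (s i)⁻¹ • (S ∩ s i • A i) with hT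
  have hTmono : ∀ ⦃S S' : Set G⦄, S ⊆ S' → T S ⊆ T S' := by
    intro S S' h
    exact Set.iUnion_mono fun i => Set.smul_set_mono (Set.inter_subset_inter_left _ h)
  set Z : Set G := ⋃ n, T^[n] U with hZ
  have hUZ : U ⊆ Z := Set.subset_iUnion (fun n => T^[n] U) 0
  have hTZsub : T Z ⊆ Z := by
    intro x hx
    rw [hT, Set.mem_iUnion] at hx
    obtain ⟨i, hi⟩ := hx
    obtain ⟨y, hy, rfl⟩ := hi
    obtain ⟨hyZ, hyX⟩ := hy
    rw [hZ, Set.mem_iUnion] at hyZ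
    obtain ⟨n, hn⟩ := hyZ
    have : (s i)⁻¹ • y ∈ T (T^[n] U) := by
      rw [hT, Set.mem_iUnion]
      exact ⟨i, Set.smul_mem_smul_set ⟨hn, hyX⟩⟩
    have h2 : (s i)⁻¹ • y ∈ T^[n + 1] U := by
      rw [Function.iterate_succ_apply']; exact this
    exact Set.mem_iUnion.2 ⟨n + 1, h2⟩
  have hZsub : Z ⊆ U ∪ T Z := by
    intro x hx
    rw [hZ, Set.mem_iUnion] at hx
    obtain ⟨n, hn⟩ := hx
    match n with
    | 0 => exact Or.inl hn
    | n + 1 =>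
      rw [Function.iterate_succ_apply'] at hn
      exact Or.inr (hTmono (Set.subset_iUnion (fun n => T^[n] U) n) hn)
  -- new data
  refine ⟨p + 1, q, Fin.snoc (fun i => (s i)⁻¹ • (Z ∩ s i • A i)) Zᶜ, B,
    Fin.snoc s 1, t, ?_, hB, ?_, ?_, ?_, ?_, htU, htD⟩
  · -- pieces pairwise disjoint
    have hsubA : ∀ i : Fin p, (s i)⁻¹ • (Z ∩ s i • A i) ⊆ A i := by
      intro i
      calc (s i)⁻¹ • (Z ∩ s i • A i) ⊆ (s i)⁻¹ • (s i • A i) :=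
            Set.smul_set_mono Set.inter_subset_right
        _ = A i := inv_smul_smul _ _
    have hsubZ : ∀ i : Fin p, (s i)⁻¹ • (Z ∩ s i • A i) ⊆ Z := by
      intro i x hx
      exact hTZsub (Set.mem_iUnion.2 ⟨i, hx⟩)
    intro i i' hne
    induction i using Fin.lastCases with
    | last =>
      induction i' using Fin.lastCases with
      | last => exact absurd rfl hne
      | cast i' =>
        simp only [Fin.snoc_castSucc, Fin.snoc_last]
        exact (Set.disjoint_compl_left_iff_subset.2 (hsubZ i'))
    | cast i =>
      induction i' using Fin.lastCases with
      | last =>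
        simp only [Fin.snoc_castSucc, Fin.snoc_last]
        exact (Set.disjoint_compl_right_iff_subset.2 (hsubZ i))
      | cast i' =>
        simp only [Fin.snoc_castSucc]
        have : i ≠ i' := fun h => hne (by rw [h])
        exact (hA i i' this).mono (hsubA i) (hsubA i')
  · -- A' disjoint from B
    intro i j
    induction i using Fin.lastCases with
    | last =>
      simp only [Fin.snoc_last]
      exact Set.disjoint_compl_left_iff_subset.2 ((Set.subset_iUnion B j).trans hUZ)
    | cast i =>
      simp only [Fin.snoc_castSucc]
      refine (hAB i j).mono ?_ le_rfl
      calc (s i)⁻¹ • (Z ∩ s i • A i) ⊆ (s i)⁻¹ • (s i • A i) :=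
            Set.smul_set_mono Set.inter_subset_right
        _ = A i := inv_smul_smul _ _
  · -- pieces cover univ
    ext x
    simp only [Set.mem_univ, iff_true, Set.mem_union, Set.mem_iUnion]
    by_cases hx : x ∈ Z
    · rcases hZsub hx with hxU | hxT
      · rw [hU, Set.mem_iUnion] at hxU
        obtain ⟨j, hj⟩ := hxU
        exact Or.inr ⟨j, hj⟩
      · rw [hT, Set.mem_iUnion] at hxT
        obtain ⟨i, hi⟩ := hxT
        exact Or.inl ⟨i.castSucc, by rw [Fin.snoc_castSucc]; exact hi⟩
    · exact Or.inl ⟨Fin.last p, by rw [Fin.snoc_last]; exact hx⟩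
  · -- translates cover univ
    ext x
    simp only [Set.mem_univ, iff_true, Set.mem_iUnion]
    by_cases hx : x ∈ Z
    · have : x ∈ ⋃ i, s i • A i := hsU ▸ Set.mem_univ x
      rw [Set.mem_iUnion] at this
      obtain ⟨i, hi⟩ := this
      refine ⟨i.castSucc, ?_⟩
      rw [Fin.snoc_castSucc, Fin.snoc_castSucc, smul_inv_smul]
      exact ⟨hx, hi⟩
    · refine ⟨Fin.last p, ?_⟩
      rw [Fin.snoc_last, Fin.snoc_last, one_smul]
      exact hx
  · -- translates pairwise disjoint
    intro i i' hne
    induction i using Fin.lastCases with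
    | last =>
      induction i' using Fin.lastCases with
      | last => exact absurd rfl hne
      | cast i' =>
        simp only [Fin.snoc_castSucc, Fin.snoc_last, one_smul, smul_inv_smul]
        exact Set.disjoint_compl_left_iff_subset.2 Set.inter_subset_left
    | cast i =>
      induction i' using Fin.lastCases with
      | last =>
        simp only [Fin.snoc_castSucc, Fin.snoc_last, one_smul, smul_inv_smul]
        exact Set.disjoint_compl_right_iff_subset.2 Set.inter_subset_left
      | cast i' =>
        simp only [Fin.snoc_castSucc, smul_inv_smul]
        have : i ≠ i' := fun h => hne (by rw [h])
        exact (hsD i i' this).mono Set.inter_subset_right Set.inter_subset_right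


/-- Equivalence of the three forms of paradoxical decomposition of a group `G`:
(1) the pieces form a partition of `G` and both families of translates are partitions of `G`;
(2) the pieces are merely pairwise disjoint and both families of translates are partitions;
(3) the pieces are pairwise disjoint and both families of translates merely cover `G`. -/
theorem paradox_equiv (G : Type*) [Group G] :
    ((∃ (p q : ℕ) (A : Fin p → Set G) (B : Fin q → Set G) (s : Fin p → G) (t : Fin q → G),
        (∀ i i', i ≠ i' → Disjoint (A i) (A i')) ∧
        (∀ j j', j ≠ j' → Disjoint (B j) (B j')) ∧
        (∀ i j, Disjoint (A i) (B j)) ∧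
        ((⋃ i, A i) ∪ (⋃ j, B j)) = Set.univ ∧
        (⋃ i, s i • A i) = Set.univ ∧
        (∀ i i', i ≠ i' → Disjoint (s i • A i) (s i' • A i')) ∧
        (⋃ j, t j • B j) = Set.univ ∧
        (∀ j j', j ≠ j' → Disjoint (t j • B j) (t j' • B j'))) ↔
      (∃ (p q : ℕ) (A : Fin p → Set G) (B : Fin q → Set G) (s : Fin p → G) (t : Fin q → G),
        (∀ i i', i ≠ i' → Disjoint (A i) (A i')) ∧
        (∀ j j', j ≠ j' → Disjoint (B j) (B j')) ∧
        (∀ i j, Disjoint (A i) (B j)) ∧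
        (⋃ i, s i • A i) = Set.univ ∧
        (∀ i i', i ≠ i' → Disjoint (s i • A i) (s i' • A i')) ∧
        (⋃ j, t j • B j) = Set.univ ∧
        (∀ j j', j ≠ j' → Disjoint (t j • B j) (t j' • B j')))) ∧
    ((∃ (p q : ℕ) (A : Fin p → Set G) (B : Fin q → Set G) (s : Fin p → G) (t : Fin q → G),
        (∀ i i', i ≠ i' → Disjoint (A i) (A i')) ∧
        (∀ j j', j ≠ j' → Disjoint (B j) (B j')) ∧
        (∀ i j, Disjoint (A i) (B j)) ∧
        (⋃ i, s i • A i) = Set.univ ∧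
        (∀ i i', i ≠ i' → Disjoint (s i • A i) (s i' • A i')) ∧
        (⋃ j, t j • B j) = Set.univ ∧
        (∀ j j', j ≠ j' → Disjoint (t j • B j) (t j' • B j'))) ↔
      (∃ (p q : ℕ) (A : Fin p → Set G) (B : Fin q → Set G) (s : Fin p → G) (t : Fin q → G),
        (∀ i i', i ≠ i' → Disjoint (A i) (A i')) ∧
        (∀ j j', j ≠ j' → Disjoint (B j) (B j')) ∧
        (∀ i j, Disjoint (A i) (B j)) ∧
        (⋃ i, s i • A i) = Set.univ ∧
        (⋃ j, t j • B j) = Set.univ)) := by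

  refine ⟨⟨?_, ?_⟩, ⟨?_, ?_⟩⟩
  · rintro ⟨p, q, A, B, s, t, hA, hB, hAB, -, hsU, hsD, htU, htD⟩
    exact ⟨p, q, A, B, s, t, hA, hB, hAB, hsU, hsD, htU, htD⟩
  · rintro ⟨p, q, A, B, s, t, hA, hB, hAB, hsU, hsD, htU, htD⟩
    exact two_to_one hA hB hAB hsU hsD htU htD
  · rintro ⟨p, q, A, B, s, t, hA, hB, hAB, hsU, -, htU, -⟩
    exact ⟨p, q, A, B, s, t, hA, hB, hAB, hsU, htU⟩
  · rintro ⟨p, q, A, B, s, t, hA, hB, hAB, hsU, htU⟩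
    obtain ⟨A', hA'sub, hA'U, hA'D⟩ := partition_of_cover s A hsU
    obtain ⟨B', hB'sub, hB'U, hB'D⟩ := partition_of_cover t B htU
    refine ⟨p, q, A', B', s, t, ?_, ?_, ?_, hA'U, hA'D, hB'U, hB'D⟩
    · exact fun i i' h => (hA i i' h).mono (hA'sub i) (hA'sub i')
    · exact fun j j' h => (hB j j' h).mono (hB'sub j) (hB'sub j')
    · exact fun i j => (hAB i j).mono (hA'sub i) (hB'sub j)
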